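/- For every positive integer n, Signgiver has a strategy in the prefix-discrepancy game on [n] such that, no matter in which order Positioner queries the positions, at every time t and for every 1 ≤ j ≤ n the board satisfies |Σ_{i=1}^{j} x_i^t| ≤ (3/2)·√n. Consequently, the game value satisfies d(n) ≤ (3/2)·√n. -/

import Mathlib

/-- A Signgiver strategy in the prefix-discrepancy game on `[n]` (positions
`Fin n`): given the history of play (a list of (position, sign) pairs, most
recent first) and the position just queried by Positioner, it returns a sign. -/
def SgStrategy (n : ℕ) : Type := List (Fin n × ℤ) → Fin n → ℤ

/-- A valid strategy always answers `+1` or `-1`. -/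
def ValidStrategy {n : ℕ} (σ : SgStrategy n) : Prop :=
  ∀ h i, σ h i = 1 ∨ σ h i = -1

/-- The history of play produced by the strategy `σ` against the (chronological,
most recent first) list `qs` of positions queried by Positioner. -/
def playHist {n : ℕ} (σ : SgStrategy n) : List (Fin n) → List (Fin n × ℤ)
  | [] => []
  | q :: qs => (q, σ (playHist σ qs) q) :: playHist σ qs

/-- The value of the board at position `i` given the history `h`: the assigned
sign if `i` has been queried, and `0` otherwise. -/
def boardVal {n : ℕ} (h : List (Fin n × ℤ)) (i : Fin n) : ℤ :=
  ((h.find? fun p => decide (p.1 = i)).map Prod.snd).getD 0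

/-- The signed discrepancy `disc(j) = Σ_{i=1}^{j} x_i` of the prefix `[1,j]`
(positions of index `< j` in the 0-indexed board). -/
def prefixDisc {n : ℕ} (h : List (Fin n × ℤ)) (j : ℕ) : ℤ :=
  ∑ p ∈ Finset.univ.filter (fun p : Fin n => (p : ℕ) < j), boardVal h p

-- counting defs
def ckF {n : ℕ} (b : ℕ) (x : Fin n → ℤ) (k : ℕ) : ℕ :=
  (Finset.univ.filter fun p : Fin n => (p : ℕ) / b = k ∧ x p ≠ 0).card
def pkF {n : ℕ} (b : ℕ) (x : Fin n → ℤ) (k : ℕ) : ℕ :=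
  (Finset.univ.filter fun p : Fin n => (p : ℕ) / b = k ∧ x p = 1).card
def mkF {n : ℕ} (b : ℕ) (x : Fin n → ℤ) (k : ℕ) : ℕ :=
  (Finset.univ.filter fun p : Fin n => (p : ℕ) / b = k ∧ x p = -1).card

def GoodB {n : ℕ} (b : ℕ) (x : Fin n → ℤ) : Prop :=
  ∀ k, 2 * pkF b x k = ckF b x k + ckF b x k % 2 ∧
       2 * mkF b x k + ckF b x k % 2 = ckF b x k

def RangeB {n : ℕ} (x : Fin n → ℤ) : Prop := ∀ p, x p = 1 ∨ x p = 0 ∨ x p = -1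

def strat (n b : ℕ) : SgStrategy n := fun h i =>
  if ckF b (boardVal h) ((i : ℕ) / b) % 2 = 0 then 1 else -1

lemma strat_valid (n b : ℕ) : ValidStrategy (strat n b) := by
  intro h i
  unfold strat
  split <;> simp

lemma boardVal_cons {n : ℕ} (q : Fin n) (s : ℤ) (h : List (Fin n × ℤ)) :
    boardVal ((q, s) :: h) = Function.update (boardVal h) q s := by
  funext i
  simp only [boardVal, List.find?]
  by_cases hqi : q = i
  · subst hqi; simp [Function.update]
  · have : (decide (q = i)) = false := by simp [hqi]
    simp [this, Function.update, Ne.symm hqi, boardVal]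

lemma boardVal_nil {n : ℕ} : (boardVal ([] : List (Fin n × ℤ))) = fun _ => 0 := by
  funext i; simp [boardVal]

lemma boardVal_play_cons {n : ℕ} (σ : SgStrategy n) (q : Fin n) (qs : List (Fin n)) :
    boardVal (playHist σ (q :: qs)) =
      Function.update (boardVal (playHist σ qs)) q (σ (playHist σ qs) q) := by
  rw [playHist, boardVal_cons]

lemma boardVal_not_mem {n : ℕ} (σ : SgStrategy n) (qs : List (Fin n)) (i : Fin n)
    (hi : i ∉ qs) : boardVal (playHist σ qs) i = 0 := by
  induction qs with
  | nil => simp [playHist, boardVal]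
  | cons q qs ih =>
    rw [boardVal_play_cons]
    rw [Function.update_apply]
    rw [if_neg (by simp at hi; exact hi.1)]
    exact ih (by simp at hi; exact hi.2)

section step
variable {n : ℕ} (b : ℕ)

lemma filter_update_ne {x : Fin n → ℤ} {q : Fin n} {s : ℤ} {k : ℕ}
    (hk : (q : ℕ) / b ≠ k) (P : ℤ → Prop) [DecidablePred P] :
    (Finset.univ.filter fun p : Fin n => (p : ℕ) / b = k ∧ P (Function.update x q s p)) =
      Finset.univ.filter fun p : Fin n => (p : ℕ) / b = k ∧ P (x p) := by
  apply Finset.filter_congr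
  intro p _
  by_cases hpq : p = q
  · subst hpq; simp [hk]
  · simp [Function.update_of_ne hpq]

lemma filter_update_eq_mem {x : Fin n → ℤ} {q : Fin n} {s : ℤ}
    (P : ℤ → Prop) [DecidablePred P] (hPs : P s) (hPx : ¬ P (x q)) :
    (Finset.univ.filter fun p : Fin n => (p : ℕ) / b = (q : ℕ) / b ∧ P (Function.update x q s p)) =
      insert q (Finset.univ.filter fun p : Fin n => (p : ℕ) / b = (q : ℕ) / b ∧ P (x p)) := by
  ext p
  by_cases hpq : p = q
  · subst hpq; simp [hPs]
  · simp [Function.update_of_ne hpq, hpq]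

lemma filter_update_eq_notmem {x : Fin n → ℤ} {q : Fin n} {s : ℤ}
    (P : ℤ → Prop) [DecidablePred P] (hPs : ¬ P s) (hPx : ¬ P (x q)) :
    (Finset.univ.filter fun p : Fin n => (p : ℕ) / b = (q : ℕ) / b ∧ P (Function.update x q s p)) =
      Finset.univ.filter fun p : Fin n => (p : ℕ) / b = (q : ℕ) / b ∧ P (x p) := by
  apply Finset.filter_congr
  intro p _
  by_cases hpq : p = q
  · subst hpq; simp [hPs, hPx]
  · simp [Function.update_of_ne hpq]

lemma q_not_mem_filter {x : Fin n → ℤ} {q : Fin n}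
    (P : ℤ → Prop) [DecidablePred P] (hPx : ¬ P (x q)) :
    q ∉ Finset.univ.filter fun p : Fin n => (p : ℕ) / b = (q : ℕ) / b ∧ P (x p) := by
  simp [hPx]

lemma good_update {x : Fin n → ℤ} (hg : GoodB b x) (hr : RangeB x) (q : Fin n)
    (hq : x q = 0) :
    GoodB b (Function.update x q (if ckF b x ((q : ℕ) / b) % 2 = 0 then 1 else -1)) ∧
    RangeB (Function.update x q (if ckF b x ((q : ℕ) / b) % 2 = 0 then 1 else -1)) := by
  set s : ℤ := if ckF b x ((q : ℕ) / b) % 2 = 0 then 1 else -1 with hs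
  constructor
  · intro k
    by_cases hk : (q : ℕ) / b = k
    · subst hk
      have hck : ckF b (Function.update x q s) ((q:ℕ)/b) = ckF b x ((q:ℕ)/b) + 1 := by
        unfold ckF
        rw [filter_update_eq_mem b (fun z => z ≠ 0) (by rw [hs]; split <;> simp) (by simp [hq])]
        rw [Finset.card_insert_of_notMem (q_not_mem_filter b (fun z => z ≠ 0) (by simp [hq]))]
      by_cases hpar : ckF b x ((q:ℕ)/b) % 2 = 0
      · have hs1 : s = 1 := by rw [hs, if_pos hpar]
        have hpk : pkF b (Function.update x q s) ((q:ℕ)/b) = pkF b x ((q:ℕ)/b) + 1 := by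
          unfold pkF
          rw [filter_update_eq_mem b (fun z => z = 1) (by rw [hs1]) (by simp [hq])]
          rw [Finset.card_insert_of_notMem (q_not_mem_filter b (fun z => z = 1) (by simp [hq]))]
        have hmk : mkF b (Function.update x q s) ((q:ℕ)/b) = mkF b x ((q:ℕ)/b) := by
          unfold mkF
          rw [filter_update_eq_notmem b (fun z => z = -1) (by rw [hs1]; norm_num) (by simp [hq])]
        have := hg ((q:ℕ)/b)
        rw [hck, hpk, hmk]
        omega
      · have hs1 : s = -1 := by rw [hs, if_neg hpar]
        have hpk : pkF b (Function.update x q s) ((q:ℕ)/b) = pkF b x ((q:ℕ)/b) := by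
          unfold pkF
          rw [filter_update_eq_notmem b (fun z => z = 1) (by rw [hs1]; norm_num) (by simp [hq])]
        have hmk : mkF b (Function.update x q s) ((q:ℕ)/b) = mkF b x ((q:ℕ)/b) + 1 := by
          unfold mkF
          rw [filter_update_eq_mem b (fun z => z = -1) (by rw [hs1]) (by simp [hq])]
          rw [Finset.card_insert_of_notMem (q_not_mem_filter b (fun z => z = -1) (by simp [hq]))]
        have := hg ((q:ℕ)/b)
        rw [hck, hpk, hmk]
        omega
    · have h1 : ckF b (Function.update x q s) k = ckF b x k := by
        unfold ckF; rw [filter_update_ne b hk (fun z => z ≠ 0)]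
      have h2 : pkF b (Function.update x q s) k = pkF b x k := by
        unfold pkF; rw [filter_update_ne b hk (fun z => z = 1)]
      have h3 : mkF b (Function.update x q s) k = mkF b x k := by
        unfold mkF; rw [filter_update_ne b hk (fun z => z = -1)]
      rw [h1, h2, h3]; exact hg k
  · intro p
    by_cases hpq : p = q
    · subst hpq; rw [Function.update_self, hs]; split <;> simp
    · rw [Function.update_of_ne hpq]; exact hr p

lemma good_play (qs : List (Fin n)) (hnd : qs.Nodup) :
    GoodB b (boardVal (playHist (strat n b) qs)) ∧
    RangeB (boardVal (playHist (strat n b) qs)) := by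
  induction qs with
  | nil =>
    show GoodB b (boardVal ([] : List (Fin n × ℤ))) ∧ _
    rw [boardVal_nil]
    constructor
    · intro k
      constructor <;> norm_num [pkF, mkF, ckF]
    · intro p; exact Or.inr (Or.inl rfl)
  | cons q qs ih =>
    have hnd' : qs.Nodup := (List.nodup_cons.mp hnd).2
    have hq : q ∉ qs := (List.nodup_cons.mp hnd).1
    obtain ⟨hg, hr⟩ := ih hnd'
    rw [boardVal_play_cons]
    have hq0 : boardVal (playHist (strat n b) qs) q = 0 := boardVal_not_mem _ _ _ hq
    have : strat n b (playHist (strat n b) qs) q =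
        (if ckF b (boardVal (playHist (strat n b) qs)) ((q : ℕ) / b) % 2 = 0 then 1 else -1) := rfl
    rw [this]
    exact good_update b hg hr q hq0

lemma ckF_le (hb : 0 < b) (x : Fin n → ℤ) (k : ℕ) : ckF b x k ≤ b := by
  have h1 : ckF b x k ≤ (Finset.univ.filter fun p : Fin n => (p : ℕ) / b = k).card := by
    apply Finset.card_le_card
    intro p hp
    simp only [Finset.mem_filter] at hp ⊢
    exact ⟨hp.1, hp.2.1⟩
  refine h1.trans ?_
  have h2 : (Finset.univ.filter fun p : Fin n => (p : ℕ) / b = k).card ≤ (Finset.range b).card := by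
    refine Finset.card_le_card_of_injOn (fun p => (p : ℕ) % b) ?_ ?_
    · intro p hp; simp only [Finset.mem_coe, Finset.mem_range]; exact Nat.mod_lt _ hb
    · intro p hp p' hp' hmod
      simp only [Finset.mem_coe, Finset.mem_filter] at hp hp'
      apply Fin.ext
      have e1 : b * k + (p : ℕ) % b = (p : ℕ) := by
        rw [← hp.2]; exact Nat.div_add_mod _ b
      have e2 : b * k + (p' : ℕ) % b = (p' : ℕ) := by
        rw [← hp'.2]; exact Nat.div_add_mod _ b
      simp only at hmod
      omega
  simpa using h2

lemma sum_subset_le_pk (x : Fin n → ℤ) (hr : RangeB x) (k : ℕ) (Q : Fin n → Prop)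
    [DecidablePred Q] :
    ∑ p ∈ Finset.univ.filter (fun p : Fin n => (p : ℕ) / b = k ∧ Q p), x p ≤ pkF b x k := by
  calc ∑ p ∈ Finset.univ.filter (fun p : Fin n => (p : ℕ) / b = k ∧ Q p), x p
      ≤ ∑ p ∈ Finset.univ.filter (fun p : Fin n => (p : ℕ) / b = k ∧ Q p),
          (if x p = 1 then (1:ℤ) else 0) := by
        apply Finset.sum_le_sum
        intro p _
        rcases hr p with h | h | h <;> simp [h]
    _ = ((Finset.univ.filter (fun p : Fin n => (p : ℕ) / b = k ∧ Q p)).filter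
          (fun p => x p = 1)).card := by rw [Finset.sum_boole]
    _ ≤ (pkF b x k : ℤ) := by
        unfold pkF
        have hsub : ((Finset.univ.filter (fun p : Fin n => (p : ℕ) / b = k ∧ Q p)).filter
            (fun p => x p = 1)) ⊆ Finset.univ.filter (fun p : Fin n => (p : ℕ) / b = k ∧ x p = 1) := by
          intro p hp
          simp only [Finset.mem_filter] at hp ⊢
          exact ⟨Finset.mem_univ p, hp.1.2.1, hp.2⟩
        exact_mod_cast Finset.card_le_card hsub

lemma neg_mk_le_sum_subset (x : Fin n → ℤ) (hr : RangeB x) (k : ℕ) (Q : Fin n → Prop)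
    [DecidablePred Q] :
    -(mkF b x k : ℤ) ≤ ∑ p ∈ Finset.univ.filter (fun p : Fin n => (p : ℕ) / b = k ∧ Q p), x p := by
  have hr' : RangeB (fun p => -x p) := by
    intro p; rcases hr p with h|h|h <;> simp [h]
  have key := sum_subset_le_pk (n := n) b (fun p => -x p) hr' k Q
  have hmk : pkF b (fun p => -x p) k = mkF b x k := by
    unfold pkF mkF
    congr 1
    apply Finset.filter_congr
    intro p _
    rw [and_congr_right_iff]
    intro _
    show -x p = 1 ↔ x p = -1
    omega
  rw [hmk] at key
  have hneg : ∑ p ∈ Finset.univ.filter (fun p : Fin n => (p : ℕ) / b = k ∧ Q p), (fun p => -x p) p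
      = -∑ p ∈ Finset.univ.filter (fun p : Fin n => (p : ℕ) / b = k ∧ Q p), x p := by
    simp [Finset.sum_neg_distrib]
  rw [hneg] at key
  linarith

lemma block_sum_eq (x : Fin n → ℤ) (hr : RangeB x) (k : ℕ) :
    ∑ p ∈ Finset.univ.filter (fun p : Fin n => (p : ℕ) / b = k), x p
      = (pkF b x k : ℤ) - (mkF b x k : ℤ) := by
  have hpt : ∀ p : Fin n, x p = (if x p = 1 then (1:ℤ) else 0) - (if x p = -1 then (1:ℤ) else 0) := by
    intro p; rcases hr p with h|h|h <;> simp [h]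
  calc ∑ p ∈ Finset.univ.filter (fun p : Fin n => (p : ℕ) / b = k), x p
      = ∑ p ∈ Finset.univ.filter (fun p : Fin n => (p : ℕ) / b = k),
          ((if x p = 1 then (1:ℤ) else 0) - (if x p = -1 then (1:ℤ) else 0)) := by
        exact Finset.sum_congr rfl fun p _ => hpt p
    _ = _ := by
        rw [Finset.sum_sub_distrib, Finset.sum_boole, Finset.sum_boole]
        unfold pkF mkF
        rw [Finset.filter_filter, Finset.filter_filter]

lemma block_sum_bounds (x : Fin n → ℤ) (hg : GoodB b x) (hr : RangeB x) (k : ℕ) :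
    0 ≤ ∑ p ∈ Finset.univ.filter (fun p : Fin n => (p : ℕ) / b = k), x p ∧
    ∑ p ∈ Finset.univ.filter (fun p : Fin n => (p : ℕ) / b = k), x p ≤ 1 := by
  rw [block_sum_eq b x hr k]
  have := hg k
  omega

lemma abs_prefixDisc_le (hb : 0 < b) (qs : List (Fin n)) (hnd : qs.Nodup)
    (j : ℕ) (hj : j ≤ n) :
    |prefixDisc (playHist (strat n b) qs) j| ≤ ((n / b + (b + 1) / 2 : ℕ) : ℤ) := by
  obtain ⟨hg, hr⟩ := good_play b qs hnd
  set x := boardVal (playHist (strat n b) qs) with hx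
  set f := j / b with hf
  -- decomposition
  have hsplit : prefixDisc (playHist (strat n b) qs) j =
      (∑ p ∈ (Finset.univ.filter fun p : Fin n => (p:ℕ) < j).filter (fun p : Fin n => (p:ℕ)/b = f), x p)
      + (∑ p ∈ (Finset.univ.filter fun p : Fin n => (p:ℕ) < j).filter (fun p : Fin n => ¬ (p:ℕ)/b = f), x p) := by
    rw [prefixDisc]
    exact (Finset.sum_filter_add_sum_filter_not _ (fun p : Fin n => (p:ℕ)/b = f) x).symm
  -- partial block piece
  have hpart1 : (Finset.univ.filter fun p : Fin n => (p:ℕ) < j).filter (fun p : Fin n => (p:ℕ)/b = f)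
      = Finset.univ.filter (fun p : Fin n => (p:ℕ)/b = f ∧ (p:ℕ) < j) := by
    rw [Finset.filter_filter]
    apply Finset.filter_congr
    intro p _
    exact and_comm
  have hup : (∑ p ∈ (Finset.univ.filter fun p : Fin n => (p:ℕ) < j).filter (fun p : Fin n => (p:ℕ)/b = f), x p)
      ≤ (pkF b x f : ℤ) := by
    rw [hpart1]; exact sum_subset_le_pk b x hr f _
  have hlo : -(mkF b x f : ℤ) ≤
      (∑ p ∈ (Finset.univ.filter fun p : Fin n => (p:ℕ) < j).filter (fun p : Fin n => (p:ℕ)/b = f), x p) := by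
    rw [hpart1]; exact neg_mk_le_sum_subset b x hr f _
  -- full blocks piece
  have hfull : (Finset.univ.filter fun p : Fin n => (p:ℕ) < j).filter (fun p : Fin n => ¬ (p:ℕ)/b = f)
      = Finset.univ.filter (fun p : Fin n => (p:ℕ)/b < f) := by
    rw [Finset.filter_filter]
    ext p
    simp only [Finset.mem_filter, Finset.mem_univ, true_and]
    constructor
    · rintro ⟨h1, h2⟩
      have := Nat.div_le_div_right (c := b) (Nat.le_of_lt_succ (Nat.lt_succ_of_lt h1))
      have h3 : (p:ℕ)/b ≤ j/b := Nat.div_le_div_right h1.le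
      omega
    · intro h1
      constructor
      · by_contra hc
        push_neg at hc
        have : j/b ≤ (p:ℕ)/b := Nat.div_le_div_right hc
        omega
      · omega
  have hfib : ∑ p ∈ Finset.univ.filter (fun p : Fin n => (p:ℕ)/b < f), x p
      = ∑ k ∈ Finset.range f, ∑ p ∈ Finset.univ.filter (fun p : Fin n => (p:ℕ)/b = k), x p := by
    rw [← Finset.sum_fiberwise_of_maps_to (g := fun p : Fin n => (p:ℕ)/b)
      (t := Finset.range f) (fun p hp => by
        simp only [Finset.mem_filter] at hp; exact Finset.mem_range.mpr hp.2)]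
    apply Finset.sum_congr rfl
    intro k hk
    apply Finset.sum_congr _ (fun _ _ => rfl)
    rw [Finset.filter_filter]
    ext p
    simp only [Finset.mem_filter, Finset.mem_univ, true_and, Finset.mem_range] at hk ⊢
    constructor
    · rintro ⟨_, h2⟩; exact h2
    · intro h2; exact ⟨h2 ▸ hk, h2⟩
  have hfull0 : 0 ≤ ∑ p ∈ (Finset.univ.filter fun p : Fin n => (p:ℕ) < j).filter (fun p : Fin n => ¬ (p:ℕ)/b = f), x p := by
    rw [hfull, hfib]
    apply Finset.sum_nonneg
    intro k _
    exact (block_sum_bounds b x hg hr k).1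
  have hfull1 : ∑ p ∈ (Finset.univ.filter fun p : Fin n => (p:ℕ) < j).filter (fun p : Fin n => ¬ (p:ℕ)/b = f), x p ≤ (f : ℤ) := by
    rw [hfull, hfib]
    calc ∑ k ∈ Finset.range f, ∑ p ∈ Finset.univ.filter (fun p : Fin n => (p:ℕ)/b = k), x p
        ≤ ∑ _k ∈ Finset.range f, (1:ℤ) := by
          apply Finset.sum_le_sum
          intro k _
          exact (block_sum_bounds b x hg hr k).2
      _ = (f : ℤ) := by simp
  -- count bounds
  have hck : ckF b x f ≤ b := ckF_le b hb x f
  have hgf := hg f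
  have hfle : f ≤ n / b := Nat.div_le_div_right hj
  rw [hsplit, abs_le]
  constructor <;> omega

lemma abs_prefixDisc_trivial (qs : List (Fin n)) (hnd : qs.Nodup) (j : ℕ) :
    |prefixDisc (playHist (strat n b) qs) j| ≤ (n : ℤ) := by
  obtain ⟨_, hr⟩ := good_play b qs hnd
  set x := boardVal (playHist (strat n b) qs) with hx
  rw [prefixDisc]
  calc |∑ p ∈ Finset.univ.filter (fun p : Fin n => (p : ℕ) < j), x p|
      ≤ ∑ p ∈ Finset.univ.filter (fun p : Fin n => (p : ℕ) < j), |x p| :=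
        Finset.abs_sum_le_sum_abs _ _
    _ ≤ ∑ _p ∈ Finset.univ.filter (fun p : Fin n => (p : ℕ) < j), (1:ℤ) := by
        apply Finset.sum_le_sum
        intro p _
        rcases hr p with h|h|h <;> simp [h]
    _ = ((Finset.univ.filter (fun p : Fin n => (p : ℕ) < j)).card : ℤ) := by simp
    _ ≤ (n : ℤ) := by
        have : (Finset.univ.filter (fun p : Fin n => (p : ℕ) < j)).card ≤ n := by
          calc (Finset.univ.filter (fun p : Fin n => (p : ℕ) < j)).card
              ≤ (Finset.univ : Finset (Fin n)).card := Finset.card_le_card (Finset.filter_subset _ _)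
            _ = n := Finset.card_univ.trans (Fintype.card_fin n)
        exact_mod_cast this

end step

lemma cast_bound (M m : ℕ) (h : 4 * M ^ 2 ≤ 9 * m) : (M : ℝ) ≤ 3 / 2 * Real.sqrt m := by
  have hm : (0:ℝ) ≤ (m:ℝ) := by positivity
  have h2 : (M:ℝ)^2 ≤ (3/2 * Real.sqrt m)^2 := by
    have he : (3/2 * Real.sqrt m)^2 = 9/4 * m := by
      rw [mul_pow, Real.sq_sqrt hm]; ring
    rw [he]
    have : (4:ℝ) * M^2 ≤ 9 * m := by exact_mod_cast h
    linarith
  calc (M:ℝ) = Real.sqrt ((M:ℝ)^2) := (Real.sqrt_sq (Nat.cast_nonneg M)).symm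
    _ ≤ Real.sqrt ((3/2 * Real.sqrt m)^2) := Real.sqrt_le_sqrt h2
    _ = 3/2 * Real.sqrt m := Real.sqrt_sq (by positivity)

lemma exists_blk (n : ℕ) (hn : 2 ≤ n) :
    ∃ b, 0 < b ∧ 4 * (n / b + (b + 1) / 2) ^ 2 ≤ 9 * n := by
  rcases lt_or_ge n 49 with h | h
  · interval_cases n <;>
      first
        | exact ⟨2, by decide⟩
        | exact ⟨3, by decide⟩
        | exact ⟨4, by decide⟩
        | exact ⟨5, by decide⟩
        | exact ⟨6, by decide⟩
        | exact ⟨7, by decide⟩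
        | exact ⟨8, by decide⟩
  · set s := Nat.sqrt (2 * n) with hs
    have h1 : s * s ≤ 2 * n := by simpa [pow_two] using Nat.sqrt_le' (2 * n)
    have h2 : 2 * n < s * s + 2 * s + 1 := by
      have := Nat.lt_succ_sqrt' (2 * n)
      rw [← hs] at this
      nlinarith [this]
    have hs9 : 9 ≤ s := by
      rw [hs, Nat.le_sqrt']
      omega
    have hspos : 0 < s := by omega
    refine ⟨s, hspos, ?_⟩
    obtain ⟨r, hr, hr2⟩ : ∃ r, 2 * n = s * s + r ∧ r ≤ 2 * s := ⟨2*n - s*s, by omega, by omega⟩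
    set q := n / s with hq
    have hqs : s * q ≤ n := Nat.mul_div_le n s
    set c := (s + 1) / 2 with hc
    have hcs : 2 * c ≤ s + 1 := by omega
    have key2 : 2 * (2*s*s + s + r)^2 ≤ 9 * (s*s)*(s*s) + 9 * (s*s) * r := by
      nlinarith [hs9, hr2, mul_le_mul_left hr2 r, mul_le_mul_left hr2 s,
        Nat.mul_le_mul hr2 hr2, sq_nonneg (s*s - 2*s)]
    have key1 : (2*q + s + 1) * s ≤ 2*n + s*s + s := by nlinarith
    have key3 : ((2*q + s + 1) * s)^2 ≤ (2*n + s*s + s)^2 := Nat.pow_le_pow_left key1 2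
    have key4 : (2*n + s*s + s)^2 ≤ 9*n*(s*s) := by nlinarith [key2, hr]
    have key5 : (2*q + s + 1)^2 * (s*s) ≤ 9*n*(s*s) := by
      calc (2*q + s + 1)^2 * (s*s) = ((2*q + s + 1) * s)^2 := by ring
        _ ≤ (2*n + s*s + s)^2 := key3
        _ ≤ 9*n*(s*s) := key4
    have key6 : (2*q + s + 1)^2 ≤ 9*n := Nat.le_of_mul_le_mul_right key5 (by positivity)
    have he : 4 * (q + c)^2 = (2*q + 2*c)^2 := by ring
    rw [he]
    calc (2*q + 2*c)^2 ≤ (2*q + s + 1)^2 := Nat.pow_le_pow_left (by omega) 2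
      _ ≤ 9 * n := key6


/-- Signgiver has a strategy keeping every prefix discrepancy at every time at
most `(3/2)·√n`, no matter in which (repetition-free) order Positioner queries
the positions; hence `d(n) ≤ (3/2)·√n`. -/
theorem stmt_11 (n : ℕ) (hn : 0 < n) :
    ∃ σ : SgStrategy n, ValidStrategy σ ∧
      ∀ qs : List (Fin n), qs.Nodup →
        ∀ j, 1 ≤ j → j ≤ n →
          |(prefixDisc (playHist σ qs) j : ℝ)| ≤ 3 / 2 * Real.sqrt n := by
  rcases lt_or_ge n 2 with h1 | h2
  · refine ⟨strat n 1, strat_valid n 1, ?_⟩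
    intro qs hnd j _ _
    have ht := abs_prefixDisc_trivial (b := 1) qs hnd j
    have hM : 4 * n ^ 2 ≤ 9 * n := by interval_cases n <;> decide
    have hc := cast_bound n n hM
    calc |(prefixDisc (playHist (strat n 1) qs) j : ℝ)|
        = ((|prefixDisc (playHist (strat n 1) qs) j| : ℤ) : ℝ) := by push_cast; ring
      _ ≤ (n : ℝ) := by exact_mod_cast ht
      _ ≤ 3 / 2 * Real.sqrt n := hc
  · obtain ⟨b, hb, hM⟩ := exists_blk n h2
    refine ⟨strat n b, strat_valid n b, ?_⟩
    intro qs hnd j _ hjn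
    set M : ℕ := n / b + (b + 1) / 2 with hMdef
    have ht := abs_prefixDisc_le b hb qs hnd j hjn
    rw [← hMdef] at ht
    have hc := cast_bound M n hM
    calc |(prefixDisc (playHist (strat n b) qs) j : ℝ)|
        = ((|prefixDisc (playHist (strat n b) qs) j| : ℤ) : ℝ) := by push_cast; ring
      _ ≤ (M : ℝ) := by exact_mod_cast ht
      _ ≤ 3 / 2 * Real.sqrt n := hc
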